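/- Let κ be an infinite cardinal with κ < κ^ω, and let A be an almost disjoint family of countably infinite subsets of κ with |A| = κ^ω. Then there is no bounded linear extension operator E : C(K_A') → C(K_A), where K_A' = A ∪ {∞} is the derived set of the generalized Mrówka space K_A. -/

import Mathlib

open Set

/-- A family of infinite subsets of `ω` is almost disjoint if any two distinct members
have finite intersection. -/
def IsAlmostDisjointFamily (𝒜 : Set (Set ℕ)) : Prop :=
  (∀ A ∈ 𝒜, A.Infinite) ∧ ∀ A ∈ 𝒜, ∀ B ∈ 𝒜, A ≠ B → (A ∩ B).Finite

/-- The underlying set of the Mrówka (Aleksandrov–Urysohn) space of an almost disjoint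
family `𝒜` of subsets of `ι`: the points of `ι`, one point for each member of `𝒜`, and
the point at infinity. -/
def Mrowka (ι : Type*) (𝒜 : Set (Set ι)) : Type _ := ι ⊕ (↥𝒜 ⊕ Unit)

namespace Mrowka
variable {ι : Type*} {𝒜 : Set (Set ι)}

/-- An isolated point `n ∈ ι` of the Mrówka space. -/
def pt (n : ι) : Mrowka ι 𝒜 := Sum.inl n

/-- The point of the Mrówka space corresponding to a member `A ∈ 𝒜`. -/
def mem (A : ↥𝒜) : Mrowka ι 𝒜 := Sum.inr (Sum.inl A)

/-- The point at infinity of the Mrówka space. -/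
def infty : Mrowka ι 𝒜 := Sum.inr (Sum.inr ())

end Mrowka

/-- The Mrówka topology: points of `ι` are isolated, basic neighborhoods of `A ∈ 𝒜` are
`{A} ∪ (A \ F)` for finite `F`, and basic neighborhoods of `∞` are complements of compact
subsets of `ι ∪ 𝒜`. -/
instance (ι : Type*) (𝒜 : Set (Set ι)) : TopologicalSpace (Mrowka ι 𝒜) :=
  TopologicalSpace.generateFrom
    ({U | ∃ n : ι, U = {Mrowka.pt n}} ∪
     {U | ∃ (A : ↥𝒜) (F : Finset ι),
        U = insert (Mrowka.mem A) (Mrowka.pt '' ((A : Set ι) \ ↑F))} ∪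
     {U | ∃ (F : Finset ι) (G : Finset ↥𝒜),
        U = insert Mrowka.infty
          ((Mrowka.mem '' {A : ↥𝒜 | A ∉ G}) ∪
           (Mrowka.pt '' {n : ι | n ∉ F ∧ ∀ A ∈ G, n ∉ (A : Set ι)}))})

/-- A family of countably infinite subsets of `ι` is almost disjoint if any two distinct
members have finite intersection. -/
def IsAlmostDisjointFamilyOfCountable {ι : Type*} (𝒜 : Set (Set ι)) : Prop :=
  (∀ A ∈ 𝒜, A.Infinite ∧ A.Countable) ∧ ∀ A ∈ 𝒜, ∀ B ∈ 𝒜, A ≠ B → (A ∩ B).Finite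

section Aux
variable {ι : Type*} {𝒜 : Set (Set ι)}

lemma mem_inj {A B : ↥𝒜} (h : (Mrowka.mem A : Mrowka ι 𝒜) = Mrowka.mem B) : A = B :=
  Sum.inl.inj (Sum.inr.inj h)

lemma pt_ne_mem {n : ι} {A : ↥𝒜} : (Mrowka.pt n : Mrowka ι 𝒜) ≠ Mrowka.mem A :=
  fun h => Sum.inl_ne_inr (show (Sum.inl n : ι ⊕ (↥𝒜 ⊕ Unit)) = Sum.inr (Sum.inl A) from h)

lemma pt_ne_infty {n : ι} : (Mrowka.pt n : Mrowka ι 𝒜) ≠ Mrowka.infty :=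
  fun h => Sum.inl_ne_inr (show (Sum.inl n : ι ⊕ (↥𝒜 ⊕ Unit)) = Sum.inr (Sum.inr ()) from h)

lemma mem_ne_infty {A : ↥𝒜} : (Mrowka.mem A : Mrowka ι 𝒜) ≠ Mrowka.infty :=
  fun h => Sum.inl_ne_inr (Sum.inr.inj (show (Sum.inr (Sum.inl A) : ι ⊕ (↥𝒜 ⊕ Unit)) = Sum.inr (Sum.inr ()) from h))

def mrowkaGen (ι : Type*) (𝒜 : Set (Set ι)) : Set (Set (Mrowka ι 𝒜)) :=
  {U | ∃ n : ι, U = {Mrowka.pt n}} ∪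
  {U | ∃ (A : ↥𝒜) (F : Finset ι),
      U = insert (Mrowka.mem A) (Mrowka.pt '' ((A : Set ι) \ ↑F))} ∪
  {U | ∃ (F : Finset ι) (G : Finset ↥𝒜),
      U = insert Mrowka.infty
        ((Mrowka.mem '' {A : ↥𝒜 | A ∉ G}) ∪
         (Mrowka.pt '' {n : ι | n ∉ F ∧ ∀ A ∈ G, n ∉ (A : Set ι)}))}

lemma isOpen_of_mem_gen {U : Set (Mrowka ι 𝒜)} (h : U ∈ mrowkaGen ι 𝒜) : IsOpen U :=
  TopologicalSpace.isOpen_generateFrom_of_mem h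

lemma isOpen_basic2 (A : ↥𝒜) (F : Finset ι) :
    IsOpen (insert (Mrowka.mem A) (Mrowka.pt '' ((A : Set ι) \ ↑F)) : Set (Mrowka ι 𝒜)) :=
  isOpen_of_mem_gen (Or.inl (Or.inr ⟨A, F, rfl⟩))

lemma isOpen_basic3 (F : Finset ι) (G : Finset ↥𝒜) :
    IsOpen (insert Mrowka.infty
        ((Mrowka.mem '' {A : ↥𝒜 | A ∉ G}) ∪
         (Mrowka.pt '' {n : ι | n ∉ F ∧ ∀ A ∈ G, n ∉ (A : Set ι)})) : Set (Mrowka ι 𝒜)) :=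
  isOpen_of_mem_gen (Or.inr ⟨F, G, rfl⟩)

lemma nbhd_mem (had : ∀ A ∈ 𝒜, ∀ B ∈ 𝒜, A ≠ B → (A ∩ B).Finite)
    (A : ↥𝒜) (U : Set (Mrowka ι 𝒜)) (hU : IsOpen U) (hAU : Mrowka.mem A ∈ U) :
    ∃ F : Finset ι, ∀ n ∈ (A : Set ι), n ∉ F → Mrowka.pt n ∈ U := by
  classical
  have hU' : TopologicalSpace.GenerateOpen (mrowkaGen ι 𝒜) U := hU
  clear hU
  induction hU' with
  | basic V hV =>
    rcases hV with (⟨n, rfl⟩ | ⟨B, F, rfl⟩) | ⟨F, G, rfl⟩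
    · exact absurd (Set.mem_singleton_iff.mp hAU) (fun h => pt_ne_mem h.symm)
    · rcases Set.mem_insert_iff.mp hAU with h | ⟨n, _, hn⟩
      · obtain rfl : A = B := mem_inj h
        exact ⟨F, fun n hn hnF => Set.mem_insert_of_mem _ ⟨n, ⟨hn, by simpa using hnF⟩, rfl⟩⟩
      · exact absurd hn pt_ne_mem
    · rcases Set.mem_insert_iff.mp hAU with h | h
      · exact absurd h mem_ne_infty
      rcases h with ⟨B, hB, hBA⟩ | ⟨n, _, hn⟩
      · obtain rfl : A = B := (mem_inj hBA).symm
        have hAG : A ∉ G := hB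
        have hfin : (↑F ∪ ⋃ B ∈ G, ((A : Set ι) ∩ (B : Set ι))).Finite := by
          refine (F.finite_toSet).union (Set.Finite.biUnion G.finite_toSet fun B hB => ?_)
          exact had A A.2 B B.2 (fun hc => hAG (by
            have : A = B := Subtype.coe_injective hc
            rw [this]; exact hB))
        refine ⟨hfin.toFinset, fun n hnA hnF => ?_⟩
        rw [Set.Finite.mem_toFinset] at hnF
        refine Set.mem_insert_of_mem _ (Or.inr ⟨n, ⟨?_, ?_⟩, rfl⟩)
        · exact fun c => hnF (Or.inl c)
        · intro B hBG c
          exact hnF (Or.inr (Set.mem_biUnion hBG ⟨hnA, c⟩))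
      · exact absurd hn pt_ne_mem
  | univ => exact ⟨∅, fun n _ _ => trivial⟩
  | inter V W hV hW ihV ihW =>
    obtain ⟨F1, h1⟩ := ihV hAU.1
    obtain ⟨F2, h2⟩ := ihW hAU.2
    exact ⟨F1 ∪ F2, fun n hn hnF =>
      ⟨h1 n hn (fun c => hnF (Finset.mem_union_left _ c)),
       h2 n hn (fun c => hnF (Finset.mem_union_right _ c))⟩⟩
  | sUnion 𝒮 h ih =>
    obtain ⟨V, hV𝒮, hmV⟩ := hAU
    obtain ⟨F, hF⟩ := ih V hV𝒮 hmV
    exact ⟨F, fun n hn hnF => ⟨V, hV𝒮, hF n hn hnF⟩⟩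

lemma isClopen_memSet (A : ↥𝒜) :
    IsClopen {x : ↥(Set.range (Mrowka.mem : ↥𝒜 → Mrowka ι 𝒜) ∪ {Mrowka.infty}) |
      (x : Mrowka ι 𝒜) = Mrowka.mem A} := by
  constructor
  · -- closed
    rw [← isOpen_compl_iff]
    have hop : IsOpen ((insert Mrowka.infty
        ((Mrowka.mem '' {B : ↥𝒜 | B ∉ ({A} : Finset ↥𝒜)}) ∪
         (Mrowka.pt '' {n : ι | n ∉ (∅ : Finset ι) ∧ ∀ B ∈ ({A} : Finset ↥𝒜), n ∉ (B : Set ι)}))) ∪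
        ⋃ (B : ↥𝒜) (_ : B ≠ A), insert (Mrowka.mem B) (Mrowka.pt '' ((B : Set ι) \ ↑(∅ : Finset ι)))) :=
      (isOpen_basic3 ∅ {A}).union (isOpen_iUnion fun B => isOpen_iUnion fun _ => isOpen_basic2 B ∅)
    have hpre := hop.preimage (continuous_subtype_val :
      Continuous (Subtype.val : ↥(Set.range (Mrowka.mem : ↥𝒜 → Mrowka ι 𝒜) ∪ {Mrowka.infty}) → _))
    convert hpre using 1
    ext x
    simp only [Set.mem_compl_iff, Set.mem_setOf_eq, Set.mem_preimage]
    constructor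
    · intro hx
      rcases x.2 with ⟨B, hB⟩ | hinf
      · have hBA : B ≠ A := fun c => hx (by rw [← hB, c])
        exact Or.inr (Set.mem_iUnion.2 ⟨B, Set.mem_iUnion.2 ⟨hBA, Or.inl hB.symm⟩⟩)
      · exact Or.inl (Or.inl hinf)
    · rintro (h | h)
      · rcases h with h | h
        · intro c; rw [h] at c; exact mem_ne_infty c.symm
        · rcases h with ⟨B, hBG, hB⟩ | ⟨n, -, hn⟩
          · intro c; rw [← hB] at c
            exact hBG (by rw [mem_inj c]; exact Finset.mem_singleton_self A)
          · intro c; rw [← hn] at c; exact pt_ne_mem c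
      · obtain ⟨B, hB⟩ := Set.mem_iUnion.mp h
        obtain ⟨hBA, hx⟩ := Set.mem_iUnion.mp hB
        rcases hx with hx | ⟨n, -, hn⟩
        · intro c; rw [hx] at c; exact hBA (mem_inj c.symm).symm
        · intro c; rw [← hn] at c; exact pt_ne_mem c
  · -- open
    have hpre := (isOpen_basic2 A ∅).preimage (continuous_subtype_val :
      Continuous (Subtype.val : ↥(Set.range (Mrowka.mem : ↥𝒜 → Mrowka ι 𝒜) ∪ {Mrowka.infty}) → _))
    convert hpre using 1
    ext x
    simp only [Set.mem_setOf_eq, Set.mem_preimage]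
    constructor
    · exact fun h => Or.inl h
    · rintro (h | ⟨n, -, hn⟩)
      · exact h
      · exfalso
        rcases x.2 with ⟨B, hB⟩ | hinf
        · rw [← hB] at hn; exact pt_ne_mem hn
        · rw [Set.mem_singleton_iff.mp hinf] at hn; exact pt_ne_infty hn

open scoped Classical in
noncomputable def gB (A : ↥𝒜) :
    BoundedContinuousFunction (↥(Set.range (Mrowka.mem : ↥𝒜 → Mrowka ι 𝒜) ∪ {Mrowka.infty})) ℝ :=
  BoundedContinuousFunction.ofNormedAddCommGroup
    (fun x => if (x : Mrowka ι 𝒜) = Mrowka.mem A then 1 else 0)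
    (by
      classical
      refine Continuous.if ?_ continuous_const continuous_const
      rw [(isClopen_memSet A).frontier_eq]
      simp)
    1 (by intro x; split_ifs <;> simp)

lemma gB_apply_pos {A : ↥𝒜} {x : ↥(Set.range (Mrowka.mem : ↥𝒜 → Mrowka ι 𝒜) ∪ {Mrowka.infty})}
    (h : (x : Mrowka ι 𝒜) = Mrowka.mem A) : gB A x = 1 := by
  simp [gB, h]

lemma gB_apply_neg {A : ↥𝒜} {x : ↥(Set.range (Mrowka.mem : ↥𝒜 → Mrowka ι 𝒜) ∪ {Mrowka.infty})}
    (h : (x : Mrowka ι 𝒜) ≠ Mrowka.mem A) : gB A x = 0 := by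
  simp [gB, h]

end Aux

/-- Let `κ` be an infinite cardinal with `κ < κ^ω` and let `𝒜` be an almost disjoint
family of countably infinite subsets of `κ` with `|𝒜| = κ^ω`. Then there is no bounded
linear extension operator from `C(K_𝒜')` to `C(K_𝒜)`, where `K_𝒜' = 𝒜 ∪ {∞}` is the
derived set of the generalized Mrówka space `K_𝒜`. -/
theorem stmt19 (ι : Type) [Infinite ι]
    (hκ : Cardinal.mk ι < Cardinal.mk ι ^ (Cardinal.aleph0 : Cardinal))
    (𝒜 : Set (Set ι)) (h𝒜 : IsAlmostDisjointFamilyOfCountable 𝒜)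
    (hcard : Cardinal.mk 𝒜 = Cardinal.mk ι ^ (Cardinal.aleph0 : Cardinal)) :
    ¬ ∃ E : (BoundedContinuousFunction
          (↥(Set.range (Mrowka.mem : ↥𝒜 → Mrowka ι 𝒜) ∪ {Mrowka.infty})) ℝ) →L[ℝ]
        (BoundedContinuousFunction (Mrowka ι 𝒜) ℝ),
      ∀ (g : BoundedContinuousFunction
          (↥(Set.range (Mrowka.mem : ↥𝒜 → Mrowka ι 𝒜) ∪ {Mrowka.infty})) ℝ)
        (x : ↥(Set.range (Mrowka.mem : ↥𝒜 → Mrowka ι 𝒜) ∪ {Mrowka.infty})),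
        E g (↑x) = g x := by
  classical
  rintro ⟨E, hE⟩
  -- Step 1: for each A, some isolated point near `mem A` where `E (gB A)` is large
  have step : ∀ A : ↥𝒜, ∃ i : ι, 1/2 < E (gB A) (Mrowka.pt i) := by
    intro A
    have hmemK' : (Mrowka.mem A : Mrowka ι 𝒜) ∈
        Set.range (Mrowka.mem : ↥𝒜 → Mrowka ι 𝒜) ∪ {Mrowka.infty} := Or.inl ⟨A, rfl⟩
    have h1 : E (gB A) (Mrowka.mem A) = 1 := by
      have := hE (gB A) ⟨Mrowka.mem A, hmemK'⟩
      rw [this, gB_apply_pos rfl]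
    have hopen : IsOpen ((E (gB A)) ⁻¹' Set.Ioi (1/2 : ℝ)) :=
      (E (gB A)).continuous.isOpen_preimage _ isOpen_Ioi
    have hmem : Mrowka.mem A ∈ (E (gB A)) ⁻¹' Set.Ioi (1/2 : ℝ) := by
      rw [Set.mem_preimage, h1]; norm_num
    obtain ⟨F, hF⟩ := nbhd_mem h𝒜.2 A _ hopen hmem
    have hAinf : (A : Set ι).Infinite := (h𝒜.1 A A.2).1
    obtain ⟨n, hnA, hnF⟩ := (hAinf.diff F.finite_toSet).nonempty
    exact ⟨n, hF n hnA (by simpa using hnF)⟩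
  choose ξ hξ using step
  -- Step 2: an infinite fiber
  have hlt : Cardinal.mk ι < Cardinal.mk ↥𝒜 := by rw [hcard]; exact hκ
  obtain ⟨i, hi⟩ := haveI : Infinite ↥𝒜 := Cardinal.infinite_iff.mpr (le_trans (Cardinal.infinite_iff.mp ‹Infinite ι›) hlt.le); Cardinal.exists_infinite_fiber ξ hlt
  have hinf : (ξ ⁻¹' {i} : Set ↥𝒜).Infinite := Set.infinite_coe_iff.mp hi
  set m : ℕ := ⌈‖E‖⌉₊ * 2 + 1 with hm
  obtain ⟨t, htsub, htcard⟩ := hinf.exists_subset_card_eq m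
  set g : BoundedContinuousFunction
      (↥(Set.range (Mrowka.mem : ↥𝒜 → Mrowka ι 𝒜) ∪ {Mrowka.infty})) ℝ :=
    ∑ A ∈ t, gB A with hg
  -- Step 3: norm of g is at most 1
  have hgnorm : ‖g‖ ≤ 1 := by
    refine (BoundedContinuousFunction.norm_le (by norm_num)).mpr fun x => ?_
    rw [hg, BoundedContinuousFunction.sum_apply]
    by_cases h : ∃ B ∈ t, (x : Mrowka ι 𝒜) = Mrowka.mem B
    · obtain ⟨B, hBt, hxB⟩ := h
      have hcong : ∀ C ∈ t, gB C x = if C = B then (1:ℝ) else 0 := by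
        intro C hC
        by_cases hCB : C = B
        · subst hCB; rw [gB_apply_pos hxB, if_pos rfl]
        · rw [gB_apply_neg, if_neg hCB]
          rw [hxB]; exact fun hh => hCB (mem_inj hh).symm
      rw [Finset.sum_congr rfl hcong, Finset.sum_ite_eq' t B (fun _ => (1:ℝ)), if_pos hBt]
      norm_num
    · have hcong : ∀ C ∈ t, gB C x = 0 := fun C hC =>
        gB_apply_neg (fun hh => h ⟨C, hC, hh⟩)
      rw [Finset.sum_congr rfl hcong, Finset.sum_const_zero]
      norm_num
  -- Step 4: E g is large at pt i
  have hval : (m : ℝ) * (1/2) ≤ E g (Mrowka.pt i) := by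
    have hsum : E g (Mrowka.pt i) = ∑ A ∈ t, E (gB A) (Mrowka.pt i) := by
      rw [hg, map_sum, BoundedContinuousFunction.sum_apply]
    rw [hsum]
    have hterm : ∀ A ∈ t, (1/2 : ℝ) ≤ E (gB A) (Mrowka.pt i) := by
      intro A hA
      have heq : ξ A = i := htsub hA
      have h2 := hξ A
      rw [heq] at h2
      linarith
    calc (m : ℝ) * (1/2) = t.card • (1/2 : ℝ) := by rw [htcard, nsmul_eq_mul]
    _ ≤ ∑ A ∈ t, E (gB A) (Mrowka.pt i) := Finset.card_nsmul_le_sum t _ _ hterm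
  -- Step 5: contradiction
  have hbound : E g (Mrowka.pt i) ≤ ‖E‖ := by
    calc E g (Mrowka.pt i) ≤ |E g (Mrowka.pt i)| := le_abs_self _
    _ ≤ ‖E g‖ := (E g).norm_coe_le_norm _
    _ ≤ ‖E‖ * ‖g‖ := E.le_opNorm g
    _ ≤ ‖E‖ * 1 := by
        have := E.opNorm_nonneg
        exact mul_le_mul_of_nonneg_left hgnorm this
    _ = ‖E‖ := mul_one _
  have hceil : ‖E‖ ≤ (⌈‖E‖⌉₊ : ℝ) := Nat.le_ceil _
  have : ((⌈‖E‖⌉₊ * 2 + 1 : ℕ) : ℝ) * (1/2) ≤ ‖E‖ := by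
    rw [← hm]; exact le_trans hval hbound
  push_cast at this
  linarith
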